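/- arXiv:2304.04882 — 5 statements merged into one kernel-verified Lean document; each statement's English description precedes it below -/
import Mathlib

section
/- Let X be a real normed space, K ⊆ X a set, ū ∈ K, and J : X → ℝ a function that is twice differentiable along segments in the following sense: for all u ∈ K there exists θ ∈ [0,1] with J(u) − J(ū) = J'(ū)(u−ū) + (1/2)·J''(ū + θ(u−ū))(u−ū)². Suppose further that for every ε > 0 there exists δ > 0 such that |J''(ū)(u−ū)² − J''(ū+θ(u−ū))(u−ū)²| ≤ ε·‖u−ū‖^{1+1/γ} for all u ∈ K with ‖u−ū‖ < δ and all θ ∈ [0,1], where γ ∈ (0,1] is fixed. Then the following are equivalent: (1) there exist c, α > 0 such that J'(ū)(u−ū) + (1/2)·J''(ū)(u−ū)² ≥ c·‖u−ū‖^{1+1/γ} for all u ∈ K with ‖u−ū‖ < α; (2) there exist c, α > 0 such that J(u) − J(ū) ≥ c·‖u−ū‖^{1+1/γ} for all u ∈ K with ‖u−ū‖ < α. -/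
open Set

theorem stmt_0 {X : Type*} [NormedAddCommGroup X] [NormedSpace ℝ X]
    (K : Set X) (ubar : X) (hubar : ubar ∈ K) (γ : ℝ) (hγ : γ ∈ Set.Ioc (0:ℝ) 1)
    (J : X → ℝ) (J' : X → X → ℝ) (J'' : X → X → ℝ)
    (hTaylor : ∀ u ∈ K, ∃ θ ∈ Set.Icc (0:ℝ) 1,
      J u - J ubar = J' ubar (u - ubar) + (1/2) * J'' (ubar + θ • (u - ubar)) (u - ubar))
    (hCont : ∀ ε > (0:ℝ), ∃ δ > (0:ℝ), ∀ u ∈ K, ‖u - ubar‖ < δ → ∀ θ ∈ Set.Icc (0:ℝ) 1,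
      |J'' ubar (u - ubar) - J'' (ubar + θ • (u - ubar)) (u - ubar)|
        ≤ ε * ‖u - ubar‖ ^ (1 + 1/γ)) :
    (∃ c > (0:ℝ), ∃ α > (0:ℝ), ∀ u ∈ K, ‖u - ubar‖ < α →
        J' ubar (u - ubar) + (1/2) * J'' ubar (u - ubar) ≥ c * ‖u - ubar‖ ^ (1 + 1/γ))
    ↔
    (∃ c > (0:ℝ), ∃ α > (0:ℝ), ∀ u ∈ K, ‖u - ubar‖ < α →
        J u - J ubar ≥ c * ‖u - ubar‖ ^ (1 + 1/γ)) := by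
  constructor
  · rintro ⟨c, hc, α, hα, h⟩
    obtain ⟨δ, hδ, hd⟩ := hCont c hc
    refine ⟨c/2, by linarith, min α δ, lt_min hα hδ, fun u hu hlt => ?_⟩
    obtain ⟨θ, hθ, heq⟩ := hTaylor u hu
    have h1 := h u hu (lt_of_lt_of_le hlt (min_le_left _ _))
    have h2 := hd u hu (lt_of_lt_of_le hlt (min_le_right _ _)) θ hθ
    have habs := abs_le.1 h2
    rw [heq] at *
    nlinarith [habs.1, habs.2]
  · rintro ⟨c, hc, α, hα, h⟩
    obtain ⟨δ, hδ, hd⟩ := hCont c hc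
    refine ⟨c/2, by linarith, min α δ, lt_min hα hδ, fun u hu hlt => ?_⟩
    obtain ⟨θ, hθ, heq⟩ := hTaylor u hu
    have h1 := h u hu (lt_of_lt_of_le hlt (min_le_left _ _))
    have h2 := hd u hu (lt_of_lt_of_le hlt (min_le_right _ _)) θ hθ
    have habs := abs_le.1 h2
    rw [heq] at h1
    nlinarith [habs.1, habs.2]
end

section
/- Let X be a real normed space, K ⊆ X, ū ∈ K, γ ∈ (0,1], and J : X → ℝ with first variation J' and second variation J''. Assume the Taylor identity: for all u ∈ K there exists θ ∈ [0,1] with J'(u)(u−ū) − J'(ū)(u−ū) = J''(ū + θ(u−ū))(u−ū)². Assume also the continuity property: for every ε > 0 there exists δ > 0 such that |J''(ū)(u−ū)² − J''(ū+θ(u−ū))(u−ū)²| ≤ ε·‖u−ū‖^{1+1/γ} whenever u ∈ K, ‖u−ū‖ < δ, θ ∈ [0,1]. If there exist μ, β > 0 such that J'(u)(u−ū) ≥ μ·‖u−ū‖^{1+1/γ} for all u ∈ K with ‖u−ū‖ < β, then there exist c, α > 0 such that J'(ū)(u−ū) + J''(ū)(u−ū)² ≥ c·‖u−ū‖^{1+1/γ}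 for all u ∈ K with ‖u−ū‖ < α. -/
theorem stmt_1 {X : Type*} [NormedAddCommGroup X] [NormedSpace ℝ X]
    (K : Set X) (ubar : X) (hubar : ubar ∈ K) (γ : ℝ) (hγ : γ ∈ Set.Ioc (0:ℝ) 1)
    (J : X → ℝ) (J' : X → X → ℝ) (J'' : X → X → ℝ)
    (hTaylor : ∀ u ∈ K, ∃ θ ∈ Set.Icc (0:ℝ) 1,
      J' u (u - ubar) - J' ubar (u - ubar) = J'' (ubar + θ • (u - ubar)) (u - ubar))
    (hCont : ∀ ε > (0:ℝ), ∃ δ > (0:ℝ), ∀ u ∈ K, ‖u - ubar‖ < δ → ∀ θ ∈ Set.Icc (0:ℝ) 1,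
      |J'' ubar (u - ubar) - J'' (ubar + θ • (u - ubar)) (u - ubar)|
        ≤ ε * ‖u - ubar‖ ^ (1 + 1/γ))
    (μ β : ℝ) (hμ : 0 < μ) (hβ : 0 < β)
    (hgrow : ∀ u ∈ K, ‖u - ubar‖ < β → J' u (u - ubar) ≥ μ * ‖u - ubar‖ ^ (1 + 1/γ)) :
    ∃ c > (0:ℝ), ∃ α > (0:ℝ), ∀ u ∈ K, ‖u - ubar‖ < α →
      J' ubar (u - ubar) + J'' ubar (u - ubar) ≥ c * ‖u - ubar‖ ^ (1 + 1/γ) := by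
  obtain ⟨δ, hδ, hC⟩ := hCont (μ/2) (by linarith)
  refine ⟨μ/2, by linarith, min β δ, lt_min hβ hδ, ?_⟩
  intro u hu hlt
  obtain ⟨θ, hθ, hT⟩ := hTaylor u hu
  have h1 := hgrow u hu (hlt.trans_le (min_le_left _ _))
  have h2 := hC u hu (hlt.trans_le (min_le_right _ _)) θ hθ
  have h3 := abs_le.mp h2
  nlinarith [h3.1, h3.2]
end

section
/- Let c > k > 0, τ > 0, d > 0, γ ∈ (0,1] be real numbers. Let K be a set, ū ∈ K, and suppose we are given functions F₁ : K → ℝ (the first variation u ↦ J'(ū)(u−ū)), F₂ : K → ℝ (the second variation u ↦ J''(ū)(u−ū)²), N : K → ℝ≥0 (u ↦ ‖u−ū‖_{L¹}), Z₁ : K → ℝ≥0 (u ↦ ‖z_{ū,u−ū}‖_{L¹}) and Z∞ : K → ℝ≥0 (u ↦ ‖z_{ū,u−ū}‖_{L∞}). Assume: (i) F₁(u) ≥ c·N(u)^{1+1/γ} for all u ∈ K; (ii) |F₂(u)| ≤ d·Z∞(u)·Z₁(u) for all u ∈ K; (iii) for every u in a subset G ⊆ K we have F₂(u) ≥ −k·N(u)^{1+1/γ},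 and for every u ∈ K \ G we have F₁(u) > τ·Z₁(u). Then for every u ∈ K with d·Z∞(u) ≤ τ/2 it holds that F₁(u) + F₂(u) ≥ min(c−k, c/2)·N(u)^{1+1/γ}. -/
theorem stmt_2 {K : Type*} (c k τ d γ : ℝ)
    (hck : k < c) (hk : 0 < k) (hτ : 0 < τ) (hd : 0 < d) (hγ : γ ∈ Set.Ioc (0:ℝ) 1)
    (F₁ F₂ N Z₁ Zinf : K → ℝ)
    (hN : ∀ u, 0 ≤ N u) (hZ₁ : ∀ u, 0 ≤ Z₁ u) (hZinf : ∀ u, 0 ≤ Zinf u)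
    (G : Set K)
    (h1 : ∀ u, F₁ u ≥ c * N u ^ (1 + 1/γ))
    (h2 : ∀ u, |F₂ u| ≤ d * Zinf u * Z₁ u)
    (h3 : ∀ u ∈ G, F₂ u ≥ -k * N u ^ (1 + 1/γ))
    (h4 : ∀ u ∉ G, F₁ u > τ * Z₁ u) :
    ∀ u, d * Zinf u ≤ τ / 2 →
      F₁ u + F₂ u ≥ min (c - k) (c / 2) * N u ^ (1 + 1/γ) := by
  intro u hu
  have hNp : (0:ℝ) ≤ N u ^ (1 + 1/γ) := Real.rpow_nonneg (hN u) _
  by_cases hG : u ∈ G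
  · have := h3 u hG
    have hmin : min (c - k) (c / 2) ≤ c - k := min_le_left _ _
    nlinarith [h1 u]
  · have h4' := h4 u hG
    have habs := h2 u
    have hF2 : -(τ/2 * Z₁ u) ≤ F₂ u := by
      have : d * Zinf u * Z₁ u ≤ τ/2 * Z₁ u :=
        mul_le_mul_of_nonneg_right hu (hZ₁ u)
      have := neg_abs_le (F₂ u)
      linarith
    have hmin : min (c - k) (c / 2) ≤ c / 2 := min_le_right _ _
    nlinarith [h1 u]
end

section
/- Let X be a real normed space, K ⊆ X, ū ∈ K, γ ∈ (0,1], and J : X → ℝ. Assume the Taylor identity: for all u ∈ K there exists θ ∈ [0,1] with J(u) − J(ū) = J'(ū)(u−ū) + (1/2)·J''(ū+θ(u−ū))(u−ū)², and the continuity property: for every ε > 0 there is δ > 0 with |J''(ū)(u−ū)² − J''(ū+θ(u−ū))(u−ū)²| ≤ ε·‖u−ū‖^{1+1/γ} for ‖u−ū‖ < δ, θ ∈ [0,1]. If J'(ū)(u−ū) + (1/2)·J''(ū)(u−ū)² ≥ c·‖u−ū‖^{1+1/γ} for all u ∈ K with ‖u−ū‖ < α (with c, α > 0), then ū is a strict local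 minimizer of J on K: there exist c', α' > 0 with J(u) − J(ū) ≥ c'·‖u−ū‖^{1+1/γ} > 0 for all u ∈ K, u ≠ ū, with ‖u−ū‖ < α'. -/
theorem stmt_8 {X : Type*} [NormedAddCommGroup X] [NormedSpace ℝ X]
    (K : Set X) (ubar : X) (hubar : ubar ∈ K) (γ : ℝ) (hγ : γ ∈ Set.Ioc (0:ℝ) 1)
    (J : X → ℝ) (J' : X → X → ℝ) (J'' : X → X → ℝ)
    (hTaylor : ∀ u ∈ K, ∃ θ ∈ Set.Icc (0:ℝ) 1,
      J u - J ubar = J' ubar (u - ubar) + (1/2) * J'' (ubar + θ • (u - ubar)) (u - ubar))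
    (hCont : ∀ ε > (0:ℝ), ∃ δ > (0:ℝ), ∀ u ∈ K, ‖u - ubar‖ < δ → ∀ θ ∈ Set.Icc (0:ℝ) 1,
      |J'' ubar (u - ubar) - J'' (ubar + θ • (u - ubar)) (u - ubar)|
        ≤ ε * ‖u - ubar‖ ^ (1 + 1/γ))
    (c α : ℝ) (hc : 0 < c) (hα : 0 < α)
    (hgrow : ∀ u ∈ K, ‖u - ubar‖ < α →
      J' ubar (u - ubar) + (1/2) * J'' ubar (u - ubar) ≥ c * ‖u - ubar‖ ^ (1 + 1/γ)) :
    ∃ c' > (0:ℝ), ∃ α' > (0:ℝ), ∀ u ∈ K, u ≠ ubar → ‖u - ubar‖ < α' →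
      J u - J ubar ≥ c' * ‖u - ubar‖ ^ (1 + 1/γ) ∧
      0 < c' * ‖u - ubar‖ ^ (1 + 1/γ) := by
  obtain ⟨δ, hδ, hCδ⟩ := hCont c hc
  refine ⟨c/2, by linarith, min α δ, lt_min hα hδ, ?_⟩
  intro u huK hune hlt
  have h1 : ‖u - ubar‖ < α := lt_of_lt_of_le hlt (min_le_left _ _)
  have h2 : ‖u - ubar‖ < δ := lt_of_lt_of_le hlt (min_le_right _ _)
  obtain ⟨θ, hθ, hT⟩ := hTaylor u huK
  have hC := hCδ u huK h2 θ hθ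
  have hg := hgrow u huK h1
  have hnorm : (0:ℝ) < ‖u - ubar‖ := by
    rw [norm_pos_iff]; exact sub_ne_zero_of_ne hune
  have hp : (0:ℝ) < ‖u - ubar‖ ^ (1 + 1/γ) :=
    Real.rpow_pos_of_pos hnorm _
  have habs := abs_le.mp hC
  constructor
  · rw [hT]
    nlinarith [habs.1, habs.2]
  · positivity
end

section
/- Let X be a real normed space, K ⊆ X, ū ∈ K, and let Z : X → ℝ≥0 be a seminorm-like function (u ↦ ‖z_{ū,u−ū}‖_{L²}). Assume the Taylor identity J'(u)(u−ū) − J'(ū)(u−ū) = J''(ū+θ(u−ū))(u−ū)² for some θ ∈ [0,1], and that for every ε > 0 there is δ > 0 such that |J''(ū)(u−ū)² − J''(ū+θ(u−ū))(u−ū)²| ≤ ε·Z(u)² for all u ∈ K with ‖u−ū‖ < δ and θ ∈ [0,1]. Then the following are equivalent: (1) there exist c, α > 0 with J'(ū)(u−ū) + J''(ū)(u−ū)² ≥ c·Z(u)² for all u ∈ K with ‖u−ū‖ < α; (2) there exist c', α' > 0 with J'(u)(u−ū) ≥ c'·Z(u)² for all u ∈ K with ‖u−ū‖ < α'. -/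
theorem stmt_12 {X : Type*} [NormedAddCommGroup X] [NormedSpace ℝ X]
    (K : Set X) (ubar : X) (hubar : ubar ∈ K)
    (Z : X → ℝ) (hZ : ∀ u, 0 ≤ Z u)
    (J' : X → X → ℝ) (J'' : X → X → ℝ)
    (hTaylor : ∀ u ∈ K, ∃ θ ∈ Set.Icc (0:ℝ) 1,
      J' u (u - ubar) - J' ubar (u - ubar) = J'' (ubar + θ • (u - ubar)) (u - ubar))
    (hCont : ∀ ε > (0:ℝ), ∃ δ > (0:ℝ), ∀ u ∈ K, ‖u - ubar‖ < δ → ∀ θ ∈ Set.Icc (0:ℝ) 1,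
      |J'' ubar (u - ubar) - J'' (ubar + θ • (u - ubar)) (u - ubar)| ≤ ε * Z u ^ 2) :
    (∃ c > (0:ℝ), ∃ α > (0:ℝ), ∀ u ∈ K, ‖u - ubar‖ < α →
      J' ubar (u - ubar) + J'' ubar (u - ubar) ≥ c * Z u ^ 2)
    ↔
    (∃ c' > (0:ℝ), ∃ α' > (0:ℝ), ∀ u ∈ K, ‖u - ubar‖ < α' →
      J' u (u - ubar) ≥ c' * Z u ^ 2) := by
  constructor
  · rintro ⟨c, hc, α, hα, h1⟩
    obtain ⟨δ, hδ, hδ'⟩ := hCont (c/2) (by linarith)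
    refine ⟨c/2, by linarith, min α δ, lt_min hα hδ, ?_⟩
    intro u hu hnorm
    obtain ⟨θ, hθ, hT⟩ := hTaylor u hu
    have hb := hδ' u hu (hnorm.trans_le (min_le_right _ _)) θ hθ
    have h1' := h1 u hu (hnorm.trans_le (min_le_left _ _))
    have habs := abs_le.mp hb
    have : J' u (u - ubar) = J' ubar (u - ubar)
        + J'' (ubar + θ • (u - ubar)) (u - ubar) := by linarith
    nlinarith [sq_nonneg (Z u)]
  · rintro ⟨c, hc, α, hα, h1⟩
    obtain ⟨δ, hδ, hδ'⟩ := hCont (c/2) (by linarith)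
    refine ⟨c/2, by linarith, min α δ, lt_min hα hδ, ?_⟩
    intro u hu hnorm
    obtain ⟨θ, hθ, hT⟩ := hTaylor u hu
    have hb := hδ' u hu (hnorm.trans_le (min_le_right _ _)) θ hθ
    have h1' := h1 u hu (hnorm.trans_le (min_le_left _ _))
    have habs := abs_le.mp hb
    nlinarith [sq_nonneg (Z u)]
end
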